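/- Let n ≥ 1 and let R = ℂ[x_{ij} : 1 ≤ i,j ≤ n] be the polynomial ring in the entries of a generic n×n matrix X. Let I ⊆ R be the ideal generated by the entries of X² (i.e. the polynomials ∑_k x_{ik} x_{kj} for all i,j) together with all 2×2 minors of X (i.e. x_{ik} x_{jl} − x_{il} x_{jk} for all i,j,k,l). Let π : R → ℂ[t_1,…,t_n] be the ℂ-algebra homomorphism sending x_{ii} ↦ t_i and x_{ij} ↦ 0 for i ≠ j (restriction of functions to the diagonal Cartan subalgebra). Then the image ideal π(I) ⊆ ℂ[t_1,…,t_n] equals the ideal generated by all products t_i t_j (1 ≤ i,j ≤ n). -/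

import Mathlib

open MvPolynomial

/-- The image under restriction to the diagonal of the ideal of the minimal
nilpotent orbit closure in `gl(n, ℂ)` (cut out by `X² = 0` and all 2×2 minors)
is the ideal generated by the products `t_i t_j`. -/
theorem stmt_0 (n : ℕ) (hn : 1 ≤ n)
    (π : MvPolynomial (Fin n × Fin n) ℂ →ₐ[ℂ] MvPolynomial (Fin n) ℂ)
    (hπ : π = aeval fun p : Fin n × Fin n =>
      if p.1 = p.2 then (X p.1 : MvPolynomial (Fin n) ℂ) else 0)
    (I : Ideal (MvPolynomial (Fin n × Fin n) ℂ))
    (hI : I = Ideal.span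
      ({q | ∃ i j : Fin n, q = ∑ k : Fin n, X (i, k) * X (k, j)} ∪
       {q | ∃ i j k l : Fin n, q = X (i, k) * X (j, l) - X (i, l) * X (j, k)})) :
    Ideal.map π I =
      Ideal.span {q : MvPolynomial (Fin n) ℂ | ∃ i j : Fin n, q = X i * X j} := by
  subst hπ hI
  rw [Ideal.map_span]
  apply le_antisymm
  · rw [Ideal.span_le]
    rintro _ ⟨q, hq, rfl⟩
    rcases hq with ⟨i, j, rfl⟩ | ⟨i, j, k, l, rfl⟩
    · simp only [map_sum, map_mul, aeval_X]
      have key : ∀ k : Fin n,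
          (if i = k then (X i : MvPolynomial (Fin n) ℂ) else 0) *
            (if k = j then X k else 0) =
          if i = k ∧ k = j then X i * X j else 0 := by
        intro k
        by_cases h1 : i = k
        · subst h1
          by_cases h2 : i = j <;> simp [h2]
        · simp [h1]
      rw [Finset.sum_congr rfl fun k _ => key k]
      by_cases h : i = j
      · subst h
        rw [Finset.sum_eq_single i]
        · simp only [and_self, if_true]
          exact Ideal.subset_span ⟨i, i, rfl⟩
        · intro k _ hk
          simp [Ne.symm hk]
        · simp
      · have hz : ∀ k ∈ Finset.univ,
            (if i = k ∧ k = j then (X i : MvPolynomial (Fin n) ℂ) * X j else 0) = 0 := by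
          intro k _
          rw [if_neg]
          rintro ⟨rfl, rfl⟩
          exact h rfl
        rw [Finset.sum_congr rfl hz, Finset.sum_const_zero]
        exact Ideal.zero_mem _
    · simp only [map_sub, map_mul, aeval_X]
      apply Ideal.sub_mem <;>
      · split_ifs <;>
        first
          | (simp only [mul_zero, zero_mul]; exact Ideal.zero_mem _)
          | exact Ideal.subset_span ⟨_, _, rfl⟩
  · rw [Ideal.span_le]
    rintro _ ⟨i, j, rfl⟩
    by_cases h : i = j
    · subst h
      have key : (X i * X i : MvPolynomial (Fin n) ℂ) =
          aeval (R := ℂ) (fun p : Fin n × Fin n =>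
            if p.1 = p.2 then (X p.1 : MvPolynomial (Fin n) ℂ) else 0)
            (∑ k : Fin n, X (i, k) * X (k, i)) := by
        simp only [map_sum, map_mul, aeval_X]
        rw [Finset.sum_eq_single i]
        · simp
        · intro k _ hk
          simp [hk, Ne.symm hk]
        · simp
      rw [key]
      exact Ideal.subset_span ⟨_, Or.inl ⟨i, i, rfl⟩, rfl⟩
    · have key : (X i * X j : MvPolynomial (Fin n) ℂ) =
          aeval (R := ℂ) (fun p : Fin n × Fin n =>
            if p.1 = p.2 then (X p.1 : MvPolynomial (Fin n) ℂ) else 0)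
            (X (i, i) * X (j, j) - X (i, j) * X (j, i)) := by
        simp [h]
      rw [key]
      exact Ideal.subset_span ⟨_, Or.inr ⟨i, j, i, j, rfl⟩, rfl⟩
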